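/- For every p ∈ (0, (3-√5)/2), there exists N ∈ (1/√p - p, 1/√p + 1 - (5/2)p) such that ∂/∂N t^(D)(N,p) = 0, where t^(D)(N,p) = 1 - (1-p)^N + (1 - p(1-p)^(N-1))/N. -/

import Mathlib

set_option maxHeartbeats 4000000

lemma expCubicLB {y : ℝ} (hy : 0 ≤ y) : 1 + y + y^2/2 + y^3/6 ≤ Real.exp y := by
  have h := Real.sum_le_exp_of_nonneg hy 4
  rw [Finset.sum_range_succ, Finset.sum_range_succ, Finset.sum_range_succ,
    Finset.sum_range_succ, Finset.sum_range_zero] at h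
  norm_num [Nat.factorial] at h
  linarith

lemma expQuarticUB {y : ℝ} (h0 : 0 ≤ y) (h1 : y ≤ 1) :
    Real.exp y ≤ 1 + y + y^2/2 + y^3/6 + 5/96*y^4 := by
  have hb := Real.exp_bound (x := y) (by rwa [abs_of_nonneg h0]) (n := 4) (by norm_num)
  rw [abs_of_nonneg h0] at hb
  have h2 := (abs_le.1 hb).2
  rw [Finset.sum_range_succ, Finset.sum_range_succ, Finset.sum_range_succ,
    Finset.sum_range_succ, Finset.sum_range_zero] at h2
  norm_num [Nat.factorial] at h2
  linarith

lemma muBounds (s : ℝ) (h0 : 0 < s) (h1 : s ≤ 5/8) :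
    s^2 + s^4/2 + s^6/3 + s^8/4 - 2*s^10 ≤ -Real.log (1 - s^2) ∧
    -Real.log (1 - s^2) ≤ s^2 + s^4/2 + s^6/3 + s^8/4 + 2*s^10 := by
  have hp0 : 0 < s^2 := by positivity
  have hp1 : s^2 ≤ 25/64 := by nlinarith
  have habs : |s^2| < 1 := by rw [abs_of_pos hp0]; linarith
  have h := Real.abs_log_sub_add_sum_range_le habs 4
  rw [Finset.sum_range_succ, Finset.sum_range_succ, Finset.sum_range_succ,
    Finset.sum_range_succ, Finset.sum_range_zero] at h
  rw [abs_of_pos hp0] at h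
  have h2 := abs_le.1 h
  have hq2 : (0:ℝ) < 1 - s^2 := by nlinarith
  have hbd : (s^2)^5 / (1 - s^2) ≤ 2*s^10 := by
    rw [div_le_iff₀ hq2]
    nlinarith [pow_pos h0 10, pow_pos h0 12]
  have hb1 := h2.1
  have hb2 := h2.2
  norm_num at hb1 hb2
  constructor <;> nlinarith [hb1, hb2, hbd]

lemma cert1 (s : ℝ) (h0 : 0 < s) (h1 : s ≤ 5/8) :
    (0:ℝ) < 6*s^4 - 6*s^5 + 4*s^6 - 5*s^7 - 29/2*s^8 - 5/4*s^9 - 7/4*s^10 - 8*s^11 - 47/8*s^12 + 131/24*s^13 + 1003/24*s^14 + 13/12*s^15 + 99/16*s^16 - 65/12*s^17 - 2615/108*s^18 + 230/9*s^19 - 14731/288*s^20 + 50119/864*s^21 - 19631/288*s^22 + 971/36*s^23 - 19187/576*s^24 + 611/576*s^25 + 4069/64*s^26 - 25169/864*s^27 + 2357/32*s^28 - 12175/192*s^29 + 2419/64*s^30 - 4573/192*s^31 + 39/8*s^32 + 455/64*s^33 - 39*s^34 + 91/8*s^35 - 24*s^36 + 21*s^37 + 8*s^39 := by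
  have h2 : (0:ℝ) ≤ 5/8 - s := by linarith
  have hA : (0:ℝ) ≤ 384/25*s^4 + 4224/125*s^5 + 49408/625*s^6 + 480192/3125*s^7 + 788192/3125*s^8 + 32073072/78125*s^9 + 259197712/390625*s^10 + 2054486784/1953125*s^11 + 16136259976/9765625*s^12 + 76425178264/29296875*s^13 + 3094211720728/732421875*s^14 + 25061486737168/3662109375*s^15 + 67748092243532/6103515625*s^16 + 1646703745260784/91552734375*s^17 + 4792050593079184/164794921875*s^18 + 969666536211462016/20599365234375*s^19 + 870432999683990734/11444091796875*s^20 + 21120056387287813474/171661376953125*s^21 + 56882664537745275302/286102294921875*s^22 + 30644013660198820048/95367431640625*s^23 + 11140388429185168904701/21457672119140625*s^24 + 89991746873093762846351/107288360595703125*s^25 + 726970401769502178843877/536441802978515625*s^26 + 17615563809580361395350454/8046627044677734375*s^27 + 28455658034703817231110326/8046627044677734375*s^28 + 42556440854385404890656487/7450580596923828125*s^29 + 9278669201943378776005563689/1005828380584716796875*s^30 + 74920870791170453171040468863/5029141902923583984375*s^31 + 201633139184268583834644016904/8381903171539306640625*s^32 + 976691447693909770269407138957/25145709514617919921875*s^33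 + 39421690328442265038972794870992/628642737865447998046875*s^34 + 106068624507802582448860983031544/1047737896442413330078125*s^35 + 2568304829758973633722943313770624/15716068446636199951171875*s^36 + 20727705595124680765196331153273536/78580342233180999755859375*s^37 := by positivity
  have key : (6*s^4 - 6*s^5 + 4*s^6 - 5*s^7 - 29/2*s^8 - 5/4*s^9 - 7/4*s^10 - 8*s^11 - 47/8*s^12 + 131/24*s^13 + 1003/24*s^14 + 13/12*s^15 + 99/16*s^16 - 65/12*s^17 - 2615/108*s^18 + 230/9*s^19 - 14731/288*s^20 + 50119/864*s^21 - 19631/288*s^22 + 971/36*s^23 - 19187/576*s^24 + 611/576*s^25 + 4069/64*s^26 - 25169/864*s^27 + 2357/32*s^28 - 12175/192*s^29 + 2419/64*s^30 - 4573/192*s^31 + 39/8*s^32 + 455/64*s^33 - 39*s^34 + 91/8*s^35 - 24*s^36 + 21*s^37 + 8*s^39 : ℝ)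
      = (5/8 - s)^2 * (384/25*s^4 + 4224/125*s^5 + 49408/625*s^6 + 480192/3125*s^7 + 788192/3125*s^8 + 32073072/78125*s^9 + 259197712/390625*s^10 + 2054486784/1953125*s^11 + 16136259976/9765625*s^12 + 76425178264/29296875*s^13 + 3094211720728/732421875*s^14 + 25061486737168/3662109375*s^15 + 67748092243532/6103515625*s^16 + 1646703745260784/91552734375*s^17 + 4792050593079184/164794921875*s^18 + 969666536211462016/20599365234375*s^19 + 870432999683990734/11444091796875*s^20 + 21120056387287813474/171661376953125*s^21 + 56882664537745275302/286102294921875*s^22 + 30644013660198820048/95367431640625*s^23 + 11140388429185168904701/21457672119140625*s^24 + 89991746873093762846351/107288360595703125*s^25 + 726970401769502178843877/536441802978515625*s^26 + 17615563809580361395350454/8046627044677734375*s^27 + 28455658034703817231110326/8046627044677734375*s^28 + 42556440854385404890656487/7450580596923828125*s^29 + 9278669201943378776005563689/1005828380584716796875*s^30 + 74920870791170453171040468863/5029141902923583984375*s^31 + 201633139184268583834644016904/8381903171539306640625*s^32 + 976691447693909770269407138957/25145709514617919921875*s^33 + 39421690328442265038972794870992/628642737865447998046875*s^34 + 106068624507802582448860983031544/1047737896442413330078125*s^35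 + 2568304829758973633722943313770624/15716068446636199951171875*s^36 + 20727705595124680765196331153273536/78580342233180999755859375*s^37)
        + (5/8 - s) * ((154881278164278314523030487380608/582076609134674072265625) * s^38) + (181267585695629560860782689983544/78580342233180999755859375) * s^39 := by ring
  have t1 : (0:ℝ) ≤ (5/8 - s)^2 * (384/25*s^4 + 4224/125*s^5 + 49408/625*s^6 + 480192/3125*s^7 + 788192/3125*s^8 + 32073072/78125*s^9 + 259197712/390625*s^10 + 2054486784/1953125*s^11 + 16136259976/9765625*s^12 + 76425178264/29296875*s^13 + 3094211720728/732421875*s^14 + 25061486737168/3662109375*s^15 + 67748092243532/6103515625*s^16 + 1646703745260784/91552734375*s^17 + 4792050593079184/164794921875*s^18 + 969666536211462016/20599365234375*s^19 + 870432999683990734/11444091796875*s^20 + 21120056387287813474/171661376953125*s^21 + 56882664537745275302/286102294921875*s^22 + 30644013660198820048/95367431640625*s^23 + 11140388429185168904701/21457672119140625*s^24 + 89991746873093762846351/107288360595703125*s^25 + 726970401769502178843877/536441802978515625*s^26 + 17615563809580361395350454/8046627044677734375*s^27 + 28455658034703817231110326/8046627044677734375*s^28 + 42556440854385404890656487/7450580596923828125*s^29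 + 9278669201943378776005563689/1005828380584716796875*s^30 + 74920870791170453171040468863/5029141902923583984375*s^31 + 201633139184268583834644016904/8381903171539306640625*s^32 + 976691447693909770269407138957/25145709514617919921875*s^33 + 39421690328442265038972794870992/628642737865447998046875*s^34 + 106068624507802582448860983031544/1047737896442413330078125*s^35 + 2568304829758973633722943313770624/15716068446636199951171875*s^36 + 20727705595124680765196331153273536/78580342233180999755859375*s^37) := mul_nonneg (sq_nonneg _) hA
  have t2 : (0:ℝ) ≤ (5/8 - s) * ((154881278164278314523030487380608/582076609134674072265625) * s^38) := by positivity
  have t3 : (0:ℝ) < (181267585695629560860782689983544/78580342233180999755859375) * s^39 := by positivity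
  linarith

lemma cert2 (s : ℝ) (h0 : 0 < s) (h1 : s ≤ 5/8) :
    (0:ℝ) < 1536*s^5 + 1536*s^6 - 8704*s^7 - 4176*s^8 + 7040*s^9 + 12960*s^10 + 5344*s^11 - 30056/3*s^12 - 9120*s^13 - 28048/3*s^14 + 50224/3*s^15 + 53513/3*s^16 - 968*s^17 - 71816/3*s^18 + 452894/27*s^19 + 74749/27*s^20 - 5332*s^21 - 1928933/54*s^22 - 68872/27*s^23 - 1850525/81*s^24 + 2908331/54*s^25 - 590215/54*s^26 + 6082955/81*s^27 - 9660925/144*s^28 + 941014/27*s^29 - 6682385/54*s^30 + 1758629/27*s^31 - 35947535/432*s^32 + 55759475/324*s^33 - 18553625/216*s^34 + 37546375/216*s^35 - 408895255/2592*s^36 + 11560975/108*s^37 - 180755335/864*s^38 + 701525/6*s^39 - 95468795/864*s^40 + 20376275/96*s^41 - 1655875/16*s^42 + 113425*s^43 - 117241375/768*s^44 + 182500/3*s^45 - 887125/8*s^46 + 40000*s^47 - 228125/6*s^48 + 80000*s^49 - 25000*s^50 - 50000*s^52 := by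
  have h2 : (0:ℝ) ≤ 5/8 - s := by linarith
  have hA : (0:ℝ) ≤ 98304/25*s^5 + 2064384/125*s^6 + 12812288/625*s^7 + 39468032/3125*s^8 + 18620416/3125*s^9 + 1555679232/78125*s^10 + 24276334592/390625*s^11 + 716293647872/5859375*s^12 + 6115642124288/29296875*s^13 + 1940059220992/5859375*s^14 + 138670864147456/244140625*s^15 + 1239778283496896/1220703125*s^16 + 10946392230513152/6103515625*s^17 + 281778771633227264/91552734375*s^18 + 4367537811921599872/823974609375*s^19 + 187244446633614085696/20599365234375*s^20 + 1596893147885413412096/102996826171875*s^21 + 13519552690795000608992/514984130859375*s^22 + 114094867134928551369728/2574920654296875*s^23 + 575708112838707944764096/7724761962890625*s^24 + 24177061102742111530639904/193119049072265625*s^25 + 22508818181880852428136416/107288360595703125*s^26 + 188318454765284934285076672/536441802978515625*s^27 + 524023414600641013540477876/894069671630859375*s^28 + 7861163614218062682168818624/8046627044677734375*s^29 + 326991874138007406985127733344/201165676116943359375*s^30 + 100609827614417673117449880512/37252902984619140625*s^31 + 7511631421522949259624914586556/1676380634307861328125*s^32 + 560146813583165848686826738639856/75437128543853759765625*s^33 +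 927113275473275648985783918901288/75437128543853759765625*s^34 + 12773501731806205693532484209925752/628642737865447998046875*s^35 + 105482675613811106362654150989810062/3143213689327239990234375*s^36 + 870223005784181363489080297495462864/15716068446636199951171875*s^37 + 7172634767881999087786599821677218106/78580342233180999755859375*s^38 + 87508150397358261368187080586945728/582076609134674072265625*s^39 + 18001438646129502349067189345566117958/72759576141834259033203125*s^40 + 444030526134549397969473694482236511334/1091393642127513885498046875*s^41 + 3648210752326768190173034638104394220908/5456968210637569427490234375*s^42 + 9984475429087285501590345123409681936384/9094947017729282379150390625*s^43 + 65538474435219158498330707824487218587427/36379788070917129516601562500*s^44 + 2015289289957371860672514394251136683459892/682121026329696178436279296875*s^45 + 16515393806662766958790104757686420490000792/3410605131648480892181396484375*s^46 + 45089262698520766553874323895928326699526528/5684341886080801486968994140625*s^47 + 369099799201146851848476890512632441634907552/28421709430404007434844970703125*s^48 + 603976800723370205372275426428791231477764608/28421709430404007434844970703125*s^49 + 24695756863521482822833101225742869128587085312/710542735760100185871124267578125*s^50 := by positivity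
  have key : (1536*s^5 + 1536*s^6 - 8704*s^7 - 4176*s^8 + 7040*s^9 + 12960*s^10 + 5344*s^11 - 30056/3*s^12 - 9120*s^13 - 28048/3*s^14 + 50224/3*s^15 + 53513/3*s^16 - 968*s^17 - 71816/3*s^18 + 452894/27*s^19 + 74749/27*s^20 - 5332*s^21 - 1928933/54*s^22 - 68872/27*s^23 - 1850525/81*s^24 + 2908331/54*s^25 - 590215/54*s^26 + 6082955/81*s^27 - 9660925/144*s^28 + 941014/27*s^29 - 6682385/54*s^30 + 1758629/27*s^31 - 35947535/432*s^32 + 55759475/324*s^33 - 18553625/216*s^34 + 37546375/216*s^35 - 408895255/2592*s^36 + 11560975/108*s^37 - 180755335/864*s^38 + 701525/6*s^39 - 95468795/864*s^40 + 20376275/96*s^41 - 1655875/16*s^42 + 113425*s^43 - 117241375/768*s^44 + 182500/3*s^45 - 887125/8*s^46 + 40000*s^47 - 228125/6*s^48 + 80000*s^49 - 25000*s^50 - 50000*s^52 : ℝ)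
      = (5/8 - s)^2 * (98304/25*s^5 + 2064384/125*s^6 + 12812288/625*s^7 + 39468032/3125*s^8 + 18620416/3125*s^9 + 1555679232/78125*s^10 + 24276334592/390625*s^11 + 716293647872/5859375*s^12 + 6115642124288/29296875*s^13 + 1940059220992/5859375*s^14 + 138670864147456/244140625*s^15 + 1239778283496896/1220703125*s^16 + 10946392230513152/6103515625*s^17 + 281778771633227264/91552734375*s^18 + 4367537811921599872/823974609375*s^19 + 187244446633614085696/20599365234375*s^20 + 1596893147885413412096/102996826171875*s^21 + 13519552690795000608992/514984130859375*s^22 + 114094867134928551369728/2574920654296875*s^23 + 575708112838707944764096/7724761962890625*s^24 + 24177061102742111530639904/193119049072265625*s^25 + 22508818181880852428136416/107288360595703125*s^26 + 188318454765284934285076672/536441802978515625*s^27 + 524023414600641013540477876/894069671630859375*s^28 + 7861163614218062682168818624/8046627044677734375*s^29 + 326991874138007406985127733344/201165676116943359375*s^30 + 100609827614417673117449880512/37252902984619140625*s^31 + 7511631421522949259624914586556/1676380634307861328125*s^32 + 560146813583165848686826738639856/75437128543853759765625*s^33 + 927113275473275648985783918901288/75437128543853759765625*s^34 + 12773501731806205693532484209925752/628642737865447998046875*s^35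 + 105482675613811106362654150989810062/3143213689327239990234375*s^36 + 870223005784181363489080297495462864/15716068446636199951171875*s^37 + 7172634767881999087786599821677218106/78580342233180999755859375*s^38 + 87508150397358261368187080586945728/582076609134674072265625*s^39 + 18001438646129502349067189345566117958/72759576141834259033203125*s^40 + 444030526134549397969473694482236511334/1091393642127513885498046875*s^41 + 3648210752326768190173034638104394220908/5456968210637569427490234375*s^42 + 9984475429087285501590345123409681936384/9094947017729282379150390625*s^43 + 65538474435219158498330707824487218587427/36379788070917129516601562500*s^44 + 2015289289957371860672514394251136683459892/682121026329696178436279296875*s^45 + 16515393806662766958790104757686420490000792/3410605131648480892181396484375*s^46 + 45089262698520766553874323895928326699526528/5684341886080801486968994140625*s^47 + 369099799201146851848476890512632441634907552/28421709430404007434844970703125*s^48 + 603976800723370205372275426428791231477764608/28421709430404007434844970703125*s^49 + 24695756863521482822833101225742869128587085312/710542735760100185871124267578125*s^50)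
        + (5/8 - s) * ((25232441698108157430775185394334088998063586304/710542735760100185871124267578125) * s^51) + (536684799059537819937074875035006490570250992/710542735760100185871124267578125) * s^52 := by ring
  have t1 : (0:ℝ) ≤ (5/8 - s)^2 * (98304/25*s^5 + 2064384/125*s^6 + 12812288/625*s^7 + 39468032/3125*s^8 + 18620416/3125*s^9 + 1555679232/78125*s^10 + 24276334592/390625*s^11 + 716293647872/5859375*s^12 + 6115642124288/29296875*s^13 + 1940059220992/5859375*s^14 + 138670864147456/244140625*s^15 + 1239778283496896/1220703125*s^16 + 10946392230513152/6103515625*s^17 + 281778771633227264/91552734375*s^18 + 4367537811921599872/823974609375*s^19 + 187244446633614085696/20599365234375*s^20 + 1596893147885413412096/102996826171875*s^21 + 13519552690795000608992/514984130859375*s^22 + 114094867134928551369728/2574920654296875*s^23 + 575708112838707944764096/7724761962890625*s^24 + 24177061102742111530639904/193119049072265625*s^25 + 22508818181880852428136416/107288360595703125*s^26 + 188318454765284934285076672/536441802978515625*s^27 + 524023414600641013540477876/894069671630859375*s^28 + 7861163614218062682168818624/8046627044677734375*s^29 + 326991874138007406985127733344/201165676116943359375*s^30 + 100609827614417673117449880512/37252902984619140625*s^31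 + 7511631421522949259624914586556/1676380634307861328125*s^32 + 560146813583165848686826738639856/75437128543853759765625*s^33 + 927113275473275648985783918901288/75437128543853759765625*s^34 + 12773501731806205693532484209925752/628642737865447998046875*s^35 + 105482675613811106362654150989810062/3143213689327239990234375*s^36 + 870223005784181363489080297495462864/15716068446636199951171875*s^37 + 7172634767881999087786599821677218106/78580342233180999755859375*s^38 + 87508150397358261368187080586945728/582076609134674072265625*s^39 + 18001438646129502349067189345566117958/72759576141834259033203125*s^40 + 444030526134549397969473694482236511334/1091393642127513885498046875*s^41 + 3648210752326768190173034638104394220908/5456968210637569427490234375*s^42 + 9984475429087285501590345123409681936384/9094947017729282379150390625*s^43 + 65538474435219158498330707824487218587427/36379788070917129516601562500*s^44 + 2015289289957371860672514394251136683459892/682121026329696178436279296875*s^45 + 16515393806662766958790104757686420490000792/3410605131648480892181396484375*s^46 + 45089262698520766553874323895928326699526528/5684341886080801486968994140625*s^47 + 369099799201146851848476890512632441634907552/28421709430404007434844970703125*s^48 + 603976800723370205372275426428791231477764608/28421709430404007434844970703125*s^49 + 24695756863521482822833101225742869128587085312/710542735760100185871124267578125*s^50) := mul_nonneg (sq_nonneg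 _) hA
  have t2 : (0:ℝ) ≤ (5/8 - s) * ((25232441698108157430775185394334088998063586304/710542735760100185871124267578125) * s^51) := by positivity
  have t3 : (0:ℝ) < (536684799059537819937074875035006490570250992/710542735760100185871124267578125) * s^52 := by positivity
  linarith

lemma cert3 (s : ℝ) (h0 : 0 < s) (h1 : s ≤ 5/8) :
    (0:ℝ) < 2*s - 2*s^2 - s^4 + 5*s^5 - 2/3*s^6 + 5/2*s^7 - 1/2*s^8 + 5/3*s^9 - 4*s^10 + 5/4*s^11 + 10*s^13 := by
  have h2 : (0:ℝ) ≤ 5/8 - s := by linarith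
  have hA : (0:ℝ) ≤ 128/25*s + 1408/125*s^2 + 14336/625*s^3 + 131264/3125*s^4 + 276544/3125*s^5 + 40767872/234375*s^6 + 394303712/1171875*s^7 + 1230738528/1953125*s^8 + 11321670592/9765625*s^9 + 20375892736/9765625*s^10 + 906265750992/244140625*s^11 := by positivity
  have key : (2*s - 2*s^2 - s^4 + 5*s^5 - 2/3*s^6 + 5/2*s^7 - 1/2*s^8 + 5/3*s^9 - 4*s^10 + 5/4*s^11 + 10*s^13 : ℝ)
      = (5/8 - s)^2 * (128/25*s + 1408/125*s^2 + 14336/625*s^3 + 131264/3125*s^4 + 276544/3125*s^5 + 40767872/234375*s^6 + 394303712/1171875*s^7 + 1230738528/1953125*s^8 + 11321670592/9765625*s^9 + 20375892736/9765625*s^10 + 906265750992/244140625*s^11)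
        + (5/8 - s) * ((997495792544/244140625) * s^12) + (93671447802/244140625) * s^13 := by ring
  have t1 : (0:ℝ) ≤ (5/8 - s)^2 * (128/25*s + 1408/125*s^2 + 14336/625*s^3 + 131264/3125*s^4 + 276544/3125*s^5 + 40767872/234375*s^6 + 394303712/1171875*s^7 + 1230738528/1953125*s^8 + 11321670592/9765625*s^9 + 20375892736/9765625*s^10 + 906265750992/244140625*s^11) := mul_nonneg (sq_nonneg _) hA
  have t2 : (0:ℝ) ≤ (5/8 - s) * ((997495792544/244140625) * s^12) := by positivity
  have t3 : (0:ℝ) < (93671447802/244140625) * s^13 := by positivity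
  linarith

lemma masterA (s μ : ℝ) (h0 : 0 < s) (h1 : s ≤ 5/8)
    (hL : (s^2 + s^4/2 + s^6/3 + s^8/4 - 2*s^10) ≤ μ) (hU : μ ≤ (s^2 + s^4/2 + s^6/3 + s^8/4 + 2*s^10)) :
    s^2 + μ * (1/s - s^2) * ((1/s - s^2) * (1 - s^2) + s^2) < Real.exp ((1/s - s^2 - 1) * μ) := by
  have hsne : s ≠ 0 := ne_of_gt h0
  have hs3 : s^3 ≤ 125/512 := by nlinarith [sq_nonneg (s - 5/8), sq_nonneg s, mul_nonneg (mul_nonneg h0.le h0.le) h0.le]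
  have hs1 : s < 1 := by linarith
  have hq : 0 < 1 - s^2 := by nlinarith
  have ha1 : 0 < 1/s - s^2 - 1 := by
    have key : 1/s - s^2 - 1 = (1 - s - s^3)/s := by field_simp; ring
    rw [key]; exact div_pos (by nlinarith) h0
  have ha0 : 0 < (1/s - s^2) := by linarith
  have haq : 0 < ((1/s - s^2) * (1 - s^2) + s^2) := by nlinarith [mul_pos ha0 hq, sq_nonneg s]
  have h8 : s^2 * s^8 ≤ s^2 * (5/8)^8 :=
    mul_le_mul_of_nonneg_left (pow_le_pow_left₀ h0.le h1 8) (sq_nonneg s)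
  have hmL : 0 < (s^2 + s^4/2 + s^6/3 + s^8/4 - 2*s^10) := by nlinarith [h8, pow_pos h0 2, pow_pos h0 4, pow_pos h0 6, pow_pos h0 8]
  have hmu : 0 < μ := lt_of_lt_of_le hmL hL
  have hz0 : 0 ≤ (1/s - s^2 - 1) * μ := le_of_lt (mul_pos ha1 hmu)
  have hexp := expCubicLB hz0
  have hyA0 : 0 ≤ ((1/s - s^2 - 1) * (s^2 + s^4/2 + s^6/3 + s^8/4 - 2*s^10)) := le_of_lt (mul_pos ha1 hmL)
  have hyAz : ((1/s - s^2 - 1) * (s^2 + s^4/2 + s^6/3 + s^8/4 - 2*s^10)) ≤ (1/s - s^2 - 1) * μ := mul_le_mul_of_nonneg_left hL ha1.le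
  have hE : 1 + ((1/s - s^2 - 1) * (s^2 + s^4/2 + s^6/3 + s^8/4 - 2*s^10)) + ((1/s - s^2 - 1) * (s^2 + s^4/2 + s^6/3 + s^8/4 - 2*s^10))^2/2 + ((1/s - s^2 - 1) * (s^2 + s^4/2 + s^6/3 + s^8/4 - 2*s^10))^3/6
      ≤ 1 + (1/s - s^2 - 1) * μ + ((1/s - s^2 - 1) * μ)^2/2 + ((1/s - s^2 - 1) * μ)^3/6 := by
    have d0 : 0 ≤ (1/s - s^2 - 1) * μ - ((1/s - s^2 - 1) * (s^2 + s^4/2 + s^6/3 + s^8/4 - 2*s^10)) := by linarith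
    have m1 : 0 ≤ ((1/s - s^2 - 1) * μ - ((1/s - s^2 - 1) * (s^2 + s^4/2 + s^6/3 + s^8/4 - 2*s^10))) * ((1/s - s^2 - 1) * μ + ((1/s - s^2 - 1) * (s^2 + s^4/2 + s^6/3 + s^8/4 - 2*s^10))) :=
      mul_nonneg d0 (by linarith)
    have m2 : 0 ≤ ((1/s - s^2 - 1) * μ - ((1/s - s^2 - 1) * (s^2 + s^4/2 + s^6/3 + s^8/4 - 2*s^10))) *
        (((1/s - s^2 - 1) * μ)^2 + ((1/s - s^2 - 1) * μ) * ((1/s - s^2 - 1) * (s^2 + s^4/2 + s^6/3 + s^8/4 - 2*s^10)) + ((1/s - s^2 - 1) * (s^2 + s^4/2 + s^6/3 + s^8/4 - 2*s^10))^2) :=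
      mul_nonneg d0 (by nlinarith [mul_nonneg hz0 hyA0, sq_nonneg ((1/s - s^2 - 1) * μ), sq_nonneg ((1/s - s^2 - 1) * (s^2 + s^4/2 + s^6/3 + s^8/4 - 2*s^10))])
    nlinarith [m1, m2]
  have step : (μ - (s^2 + s^4/2 + s^6/3 + s^8/4 + 2*s^10)) * ((1/s - s^2) * ((1/s - s^2) * (1 - s^2) + s^2)) ≤ 0 :=
    mul_nonpos_of_nonpos_of_nonneg (by linarith) (le_of_lt (mul_pos ha0 haq))
  have hLHS : s^2 + μ * (1/s - s^2) * ((1/s - s^2) * (1 - s^2) + s^2) ≤ s^2 + (s^2 + s^4/2 + s^6/3 + s^8/4 + 2*s^10) * (1/s - s^2) * ((1/s - s^2) * (1 - s^2) + s^2) := by nlinarith [step]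
  have hcore : s^2 + (s^2 + s^4/2 + s^6/3 + s^8/4 + 2*s^10) * (1/s - s^2) * ((1/s - s^2) * (1 - s^2) + s^2) < 1 + ((1/s - s^2 - 1) * (s^2 + s^4/2 + s^6/3 + s^8/4 - 2*s^10)) + ((1/s - s^2 - 1) * (s^2 + s^4/2 + s^6/3 + s^8/4 - 2*s^10))^2/2 + ((1/s - s^2 - 1) * (s^2 + s^4/2 + s^6/3 + s^8/4 - 2*s^10))^3/6 := by
    have hP := cert1 s h0 h1
    rw [← sub_pos]
    have key : 1 + ((1/s - s^2 - 1) * (s^2 + s^4/2 + s^6/3 + s^8/4 - 2*s^10)) + ((1/s - s^2 - 1) * (s^2 + s^4/2 + s^6/3 + s^8/4 - 2*s^10))^2/2 + ((1/s - s^2 - 1) * (s^2 + s^4/2 + s^6/3 + s^8/4 - 2*s^10))^3/6 - (s^2 + (s^2 + s^4/2 + s^6/3 + s^8/4 + 2*s^10) * (1/s - s^2) * ((1/s - s^2) * (1 - s^2) + s^2))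
        = (6*s^4 - 6*s^5 + 4*s^6 - 5*s^7 - 29/2*s^8 - 5/4*s^9 - 7/4*s^10 - 8*s^11 - 47/8*s^12 + 131/24*s^13 + 1003/24*s^14 + 13/12*s^15 + 99/16*s^16 - 65/12*s^17 - 2615/108*s^18 + 230/9*s^19 - 14731/288*s^20 + 50119/864*s^21 - 19631/288*s^22 + 971/36*s^23 - 19187/576*s^24 + 611/576*s^25 + 4069/64*s^26 - 25169/864*s^27 + 2357/32*s^28 - 12175/192*s^29 + 2419/64*s^30 - 4573/192*s^31 + 39/8*s^32 + 455/64*s^33 - 39*s^34 + 91/8*s^35 - 24*s^36 + 21*s^37 + 8*s^39)/(6*s^3) := by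
      field_simp
      ring
    rw [key]
    exact div_pos hP (by positivity)
  linarith

lemma masterB (s μ : ℝ) (h0 : 0 < s) (h1 : s ≤ 5/8)
    (hL : (s^2 + s^4/2 + s^6/3 + s^8/4 - 2*s^10) ≤ μ) (hU : μ ≤ (s^2 + s^4/2 + s^6/3 + s^8/4 + 2*s^10)) :
    Real.exp ((1/s - 5/2*s^2) * μ) < s^2 + μ * (1/s + 1 - 5/2*s^2) * ((1/s + 1 - 5/2*s^2) * (1 - s^2) + s^2) := by
  have hsne : s ≠ 0 := ne_of_gt h0
  have hs3 : s^3 ≤ 125/512 := by nlinarith [sq_nonneg (s - 5/8), sq_nonneg s, mul_nonneg (mul_nonneg h0.le h0.le) h0.le]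
  have hs1 : s < 1 := by linarith
  have hq : 0 < 1 - s^2 := by nlinarith
  have hb1 : 0 < 1/s - 5/2*s^2 := by
    have key : 1/s - 5/2*s^2 = (2 - 5*s^3)/(2*s) := by field_simp
    rw [key]; exact div_pos (by nlinarith) (by linarith)
  have hb0 : 0 < (1/s + 1 - 5/2*s^2) := by linarith
  have hbq : 0 < ((1/s + 1 - 5/2*s^2) * (1 - s^2) + s^2) := by nlinarith [mul_pos hb0 hq, sq_nonneg s]
  have h8 : s^2 * s^8 ≤ s^2 * (5/8)^8 :=
    mul_le_mul_of_nonneg_left (pow_le_pow_left₀ h0.le h1 8) (sq_nonneg s)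
  have hmL : 0 < (s^2 + s^4/2 + s^6/3 + s^8/4 - 2*s^10) := by nlinarith [h8, pow_pos h0 2, pow_pos h0 4, pow_pos h0 6, pow_pos h0 8]
  have hmU : 0 < (s^2 + s^4/2 + s^6/3 + s^8/4 + 2*s^10) := by positivity
  have hmu : 0 < μ := lt_of_lt_of_le hmL hL
  have hw0 : 0 ≤ (1/s - 5/2*s^2) * μ := le_of_lt (mul_pos hb1 hmu)
  have hwYB : (1/s - 5/2*s^2) * μ ≤ ((1/s - 5/2*s^2) * (s^2 + s^4/2 + s^6/3 + s^8/4 + 2*s^10)) := mul_le_mul_of_nonneg_left hU hb1.le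
  have hYB0 : 0 ≤ ((1/s - 5/2*s^2) * (s^2 + s^4/2 + s^6/3 + s^8/4 + 2*s^10)) := le_of_lt (mul_pos hb1 hmU)
  have hYB1 : ((1/s - 5/2*s^2) * (s^2 + s^4/2 + s^6/3 + s^8/4 + 2*s^10)) ≤ 1 := by
    have h3 := cert3 s h0 h1
    have key : 1 - ((1/s - 5/2*s^2) * (s^2 + s^4/2 + s^6/3 + s^8/4 + 2*s^10)) = (2*s - 2*s^2 - s^4 + 5*s^5 - 2/3*s^6 + 5/2*s^7 - 1/2*s^8 + 5/3*s^9 - 4*s^10 + 5/4*s^11 + 10*s^13)/(2*s) := by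
      field_simp
      ring
    have hd : 0 < (2*s - 2*s^2 - s^4 + 5*s^5 - 2/3*s^6 + 5/2*s^7 - 1/2*s^8 + 5/3*s^9 - 4*s^10 + 5/4*s^11 + 10*s^13)/(2*s) := div_pos h3 (by linarith)
    linarith [key ▸ hd]
  have hw1 : (1/s - 5/2*s^2) * μ ≤ 1 := le_trans hwYB hYB1
  have hexp := expQuarticUB hw0 hw1
  have hE : 1 + (1/s - 5/2*s^2) * μ + ((1/s - 5/2*s^2) * μ)^2/2 + ((1/s - 5/2*s^2) * μ)^3/6
        + 5/96*((1/s - 5/2*s^2) * μ)^4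
      ≤ 1 + ((1/s - 5/2*s^2) * (s^2 + s^4/2 + s^6/3 + s^8/4 + 2*s^10)) + ((1/s - 5/2*s^2) * (s^2 + s^4/2 + s^6/3 + s^8/4 + 2*s^10))^2/2 + ((1/s - 5/2*s^2) * (s^2 + s^4/2 + s^6/3 + s^8/4 + 2*s^10))^3/6 + 5/96*((1/s - 5/2*s^2) * (s^2 + s^4/2 + s^6/3 + s^8/4 + 2*s^10))^4 := by
    have d0 : 0 ≤ ((1/s - 5/2*s^2) * (s^2 + s^4/2 + s^6/3 + s^8/4 + 2*s^10)) - (1/s - 5/2*s^2) * μ := by linarith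
    have m1 : 0 ≤ (((1/s - 5/2*s^2) * (s^2 + s^4/2 + s^6/3 + s^8/4 + 2*s^10)) - (1/s - 5/2*s^2) * μ) * (((1/s - 5/2*s^2) * (s^2 + s^4/2 + s^6/3 + s^8/4 + 2*s^10)) + (1/s - 5/2*s^2) * μ) :=
      mul_nonneg d0 (by linarith)
    have m2 : 0 ≤ (((1/s - 5/2*s^2) * (s^2 + s^4/2 + s^6/3 + s^8/4 + 2*s^10)) - (1/s - 5/2*s^2) * μ) *
        (((1/s - 5/2*s^2) * (s^2 + s^4/2 + s^6/3 + s^8/4 + 2*s^10))^2 + ((1/s - 5/2*s^2) * (s^2 + s^4/2 + s^6/3 + s^8/4 + 2*s^10)) * ((1/s - 5/2*s^2) * μ) + ((1/s - 5/2*s^2) * μ)^2) :=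
      mul_nonneg d0 (by nlinarith [mul_nonneg hYB0 hw0, sq_nonneg ((1/s - 5/2*s^2) * (s^2 + s^4/2 + s^6/3 + s^8/4 + 2*s^10)), sq_nonneg ((1/s - 5/2*s^2) * μ)])
    have m3 : 0 ≤ (((1/s - 5/2*s^2) * (s^2 + s^4/2 + s^6/3 + s^8/4 + 2*s^10)) - (1/s - 5/2*s^2) * μ) *
        (((1/s - 5/2*s^2) * (s^2 + s^4/2 + s^6/3 + s^8/4 + 2*s^10))^3 + ((1/s - 5/2*s^2) * (s^2 + s^4/2 + s^6/3 + s^8/4 + 2*s^10))^2 * ((1/s - 5/2*s^2) * μ) + ((1/s - 5/2*s^2) * (s^2 + s^4/2 + s^6/3 + s^8/4 + 2*s^10)) * ((1/s - 5/2*s^2) * μ)^2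
          + ((1/s - 5/2*s^2) * μ)^3) := by
      refine mul_nonneg d0 ?_
      have t1 : 0 ≤ ((1/s - 5/2*s^2) * (s^2 + s^4/2 + s^6/3 + s^8/4 + 2*s^10))^3 := by positivity
      have t2 : 0 ≤ ((1/s - 5/2*s^2) * (s^2 + s^4/2 + s^6/3 + s^8/4 + 2*s^10))^2 * ((1/s - 5/2*s^2) * μ) := mul_nonneg (sq_nonneg _) hw0
      have t3 : 0 ≤ ((1/s - 5/2*s^2) * (s^2 + s^4/2 + s^6/3 + s^8/4 + 2*s^10)) * ((1/s - 5/2*s^2) * μ)^2 := mul_nonneg hYB0 (sq_nonneg _)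
      have t4 : 0 ≤ ((1/s - 5/2*s^2) * μ)^3 := by positivity
      linarith
    nlinarith [m1, m2, m3]
  have hcore : 1 + ((1/s - 5/2*s^2) * (s^2 + s^4/2 + s^6/3 + s^8/4 + 2*s^10)) + ((1/s - 5/2*s^2) * (s^2 + s^4/2 + s^6/3 + s^8/4 + 2*s^10))^2/2 + ((1/s - 5/2*s^2) * (s^2 + s^4/2 + s^6/3 + s^8/4 + 2*s^10))^3/6 + 5/96*((1/s - 5/2*s^2) * (s^2 + s^4/2 + s^6/3 + s^8/4 + 2*s^10))^4
      < s^2 + (s^2 + s^4/2 + s^6/3 + s^8/4 - 2*s^10) * (1/s + 1 - 5/2*s^2) * ((1/s + 1 - 5/2*s^2) * (1 - s^2) + s^2) := by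
    have hP := cert2 s h0 h1
    rw [← sub_pos]
    have key : s^2 + (s^2 + s^4/2 + s^6/3 + s^8/4 - 2*s^10) * (1/s + 1 - 5/2*s^2) * ((1/s + 1 - 5/2*s^2) * (1 - s^2) + s^2)
        - (1 + ((1/s - 5/2*s^2) * (s^2 + s^4/2 + s^6/3 + s^8/4 + 2*s^10)) + ((1/s - 5/2*s^2) * (s^2 + s^4/2 + s^6/3 + s^8/4 + 2*s^10))^2/2 + ((1/s - 5/2*s^2) * (s^2 + s^4/2 + s^6/3 + s^8/4 + 2*s^10))^3/6 + 5/96*((1/s - 5/2*s^2) * (s^2 + s^4/2 + s^6/3 + s^8/4 + 2*s^10))^4)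
        = (1536*s^5 + 1536*s^6 - 8704*s^7 - 4176*s^8 + 7040*s^9 + 12960*s^10 + 5344*s^11 - 30056/3*s^12 - 9120*s^13 - 28048/3*s^14 + 50224/3*s^15 + 53513/3*s^16 - 968*s^17 - 71816/3*s^18 + 452894/27*s^19 + 74749/27*s^20 - 5332*s^21 - 1928933/54*s^22 - 68872/27*s^23 - 1850525/81*s^24 + 2908331/54*s^25 - 590215/54*s^26 + 6082955/81*s^27 - 9660925/144*s^28 + 941014/27*s^29 - 6682385/54*s^30 + 1758629/27*s^31 - 35947535/432*s^32 + 55759475/324*s^33 - 18553625/216*s^34 + 37546375/216*s^35 - 408895255/2592*s^36 + 11560975/108*s^37 - 180755335/864*s^38 + 701525/6*s^39 - 95468795/864*s^40 + 20376275/96*s^41 - 1655875/16*s^42 + 113425*s^43 - 117241375/768*s^44 + 182500/3*s^45 - 887125/8*s^46 + 40000*s^47 - 228125/6*s^48 + 80000*s^49 - 25000*s^50 - 50000*s^52)/(1536*s^4) := by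
      field_simp
      ring
    rw [key]
    exact div_pos hP (by positivity)
  have step : 0 ≤ (μ - (s^2 + s^4/2 + s^6/3 + s^8/4 - 2*s^10)) * ((1/s + 1 - 5/2*s^2) * ((1/s + 1 - 5/2*s^2) * (1 - s^2) + s^2)) :=
    mul_nonneg (by linarith) (le_of_lt (mul_pos hb0 hbq))
  have hLHS : s^2 + (s^2 + s^4/2 + s^6/3 + s^8/4 - 2*s^10) * (1/s + 1 - 5/2*s^2) * ((1/s + 1 - 5/2*s^2) * (1 - s^2) + s^2) ≤ s^2 + μ * (1/s + 1 - 5/2*s^2) * ((1/s + 1 - 5/2*s^2) * (1 - s^2) + s^2) := by nlinarith [step]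
  linarith

theorem stmt_13 (p : ℝ) (hp : p ∈ Set.Ioo (0:ℝ) ((3 - Real.sqrt 5) / 2)) :
    ∃ N : ℝ, N ∈ Set.Ioo (1 / Real.sqrt p - p) (1 / Real.sqrt p + 1 - (5 / 2) * p) ∧
      deriv (fun x : ℝ =>
        1 - (1 - p) ^ x + (1 - p * (1 - p) ^ (x - 1)) / x) N = 0 := by
  obtain ⟨hp0, hp2⟩ := hp
  obtain ⟨s, hs0, rfl⟩ : ∃ s : ℝ, 0 < s ∧ s^2 = p :=
    ⟨Real.sqrt p, Real.sqrt_pos.2 hp0, Real.sq_sqrt hp0.le⟩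
  rw [Real.sqrt_sq hs0.le]
  have hs5 := Real.sq_sqrt (show (0:ℝ) ≤ 5 by norm_num)
  have hn5 := Real.sqrt_nonneg 5
  have hp14 : s^2 < 25/64 := by nlinarith [sq_nonneg (Real.sqrt 5 - 71/32)]
  have h58 : s ≤ 5/8 := by nlinarith
  have hq : 0 < 1 - s^2 := by nlinarith
  obtain ⟨hmuL, hmuU⟩ := muBounds s hs0 h58
  set μ := -Real.log (1 - s^2) with hmu
  have hlog : Real.log (1 - s^2) = -μ := by rw [hmu]; ring
  have hA := masterA s μ hs0 h58 hmuL hmuU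
  have hB := masterB s μ hs0 h58 hmuL hmuU
  have hs3 : s^3 ≤ 125/512 := by
    nlinarith [sq_nonneg (s - 5/8), sq_nonneg s, mul_nonneg (mul_nonneg hs0.le hs0.le) hs0.le]
  have ha1 : 0 < 1/s - s^2 - 1 := by
    have key : 1/s - s^2 - 1 = (1 - s - s^3)/s := by field_simp; ring
    rw [key]; exact div_pos (by nlinarith) hs0
  have ha0 : 0 < 1/s - s^2 := by linarith
  have hab : (1/s - s^2 : ℝ) < 1/s + 1 - 5/2*s^2 := by nlinarith
  have hb0 : 0 < 1/s + 1 - 5/2*s^2 := by nlinarith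
  set F : ℝ → ℝ := fun x =>
    ((1 - s^2) ^ (x - 1) * (μ*(1 - s^2)*x^2 + μ*s^2*x + s^2) - 1)/x^2 with hFdef
  have hderiv : ∀ x ∈ Set.Icc (1/s - s^2) (1/s + 1 - 5/2*s^2),
      HasDerivAt (fun x : ℝ => 1 - (1 - s^2) ^ x + (1 - s^2 * (1 - s^2) ^ (x - 1)) / x) (F x) x := by
    intro x hx
    have hx0 : 0 < x := lt_of_lt_of_le ha0 hx.1
    have H1 : HasDerivAt (fun y : ℝ => (1 - s^2) ^ y)
        ((1 - s^2) ^ x * Real.log (1 - s^2)) x :=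
      (Real.hasStrictDerivAt_const_rpow hq x).hasDerivAt
    have H2 : HasDerivAt (fun y : ℝ => (1 - s^2) ^ (y - 1))
        ((1 - s^2) ^ (x - 1) * Real.log (1 - s^2)) x := by
      have h' := ((Real.hasStrictDerivAt_const_rpow hq (x - 1)).hasDerivAt).comp x
        ((hasDerivAt_id x).sub_const 1)
      rw [mul_one] at h'
      exact h'
    have H3 : HasDerivAt (fun y : ℝ => 1 - s^2 * (1 - s^2) ^ (y - 1))
        (-(s^2 * ((1 - s^2) ^ (x - 1) * Real.log (1 - s^2)))) x :=
      (H2.const_mul (s^2)).const_sub 1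
    have H4 := H3.div (hasDerivAt_id x) hx0.ne'
    have H5 := ((hasDerivAt_const x (1:ℝ)).sub H1).add H4
    convert H5 using 1
    · rfl
    · rfl
    · rfl
    have hsplit : (1 - s^2) ^ (x : ℝ) = (1 - s^2) ^ (x - 1 : ℝ) * (1 - s^2) := by
      have h := Real.rpow_add hq (x - 1) 1
      have h2 : x - 1 + 1 = x := by ring
      rw [h2, Real.rpow_one] at h
      exact h
    rw [hFdef]
    simp only []
    rw [hsplit, hlog]
    simp only [id]
    field_simp
    ring
  have hFa : F (1/s - s^2) < 0 := by
    have hrw : (1 - s^2) ^ ((1/s - s^2) - 1 : ℝ) = Real.exp (-((1/s - s^2 - 1) * μ)) := by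
      rw [Real.rpow_def_of_pos hq, hlog]
      congr 1
      ring
    rw [hFdef]
    simp only []
    rw [hrw]
    apply div_neg_of_neg_of_pos _ (pow_pos ha0 2)
    have hex := Real.exp_pos (-((1/s - s^2 - 1) * μ))
    have hmul : Real.exp (-((1/s - s^2 - 1) * μ)) * Real.exp ((1/s - s^2 - 1) * μ) = 1 := by
      rw [← Real.exp_add]; norm_num
    have heq : μ*(1 - s^2)*(1/s - s^2)^2 + μ*s^2*(1/s - s^2) + s^2
        = s^2 + μ * (1/s - s^2) * ((1/s - s^2) * (1 - s^2) + s^2) := by ring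
    have h1 := mul_lt_mul_of_pos_left hA hex
    rw [hmul] at h1
    nlinarith [h1]
  have hFb : 0 < F (1/s + 1 - 5/2*s^2) := by
    have hrw : (1 - s^2) ^ ((1/s + 1 - 5/2*s^2) - 1 : ℝ)
        = Real.exp (-((1/s - 5/2*s^2) * μ)) := by
      rw [Real.rpow_def_of_pos hq, hlog]
      congr 1
      ring
    rw [hFdef]
    simp only []
    rw [hrw]
    apply div_pos _ (pow_pos hb0 2)
    have hex := Real.exp_pos (-((1/s - 5/2*s^2) * μ))
    have hmul : Real.exp (-((1/s - 5/2*s^2) * μ)) * Real.exp ((1/s - 5/2*s^2) * μ) = 1 := by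
      rw [← Real.exp_add]; norm_num
    have h1 := mul_lt_mul_of_pos_left hB hex
    rw [hmul] at h1
    nlinarith [h1]
  have h0mem : (0:ℝ) ∈ F '' Set.Ioo (1/s - s^2) (1/s + 1 - 5/2*s^2) :=
    exists_hasDerivWithinAt_eq_of_gt_of_lt hab.le
      (fun x hx => (hderiv x hx).hasDerivWithinAt) hFa hFb
  obtain ⟨N, hN, hFN⟩ := h0mem
  refine ⟨N, by simpa using hN, ?_⟩
  rw [(hderiv N (Set.Ioo_subset_Icc_self hN)).deriv]
  exact hFN
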